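/- There is no finite nonempty sequence μ₁, …, μ_r of probability mass functions on the symmetric group S₄, where each μ_i is either (a) a point mass δ_π for some permutation π ∈ S₄ (a deterministic permutation), (b) the uniform distribution on {id, τ} for some transposition τ ∈ S₄ (a 2-card random cut), (c) the uniform distribution on {id, c, c²} for some 3-cycle c ∈ S₄ (a 3-card random cut), or (d) the uniform distribution on {id, σ, σ², σ³} for some 4-cycle σ ∈ S₄ (a 4-card random cut), such that the iterated convolution μ₁ * μ₂ * ⋯ * μ_r equals the uniform distribution on the set {id, (1 2)(3 4)}. -/

import Mathlib

open Finset

variable {G : Type*} [Group G] [Fintype G] [DecidableEq G]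

/-- Convolution of two mass functions on a finite group:
`(μ * ν)(g) = ∑ h, μ(h) · ν(h⁻¹ g)`. -/
def convol (μ ν : G → ℝ) : G → ℝ := fun g => ∑ h : G, μ h * ν (h⁻¹ * g)

/-- Point mass `δ_π`. -/
def delta (π : G) : G → ℝ := fun g => if g = π then 1 else 0

/-- Uniform distribution on a finite subset `S`: probability `1/|S|` on each
element of `S` and `0` elsewhere. -/
noncomputable def unif (S : Finset G) : G → ℝ := fun g => if g ∈ S then (S.card : ℝ)⁻¹ else 0

/-- Iterated convolution `μ₁ * μ₂ * ⋯ * μ_r` of a list of mass functions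
(the empty list yields the point mass at the identity, a neutral element
for convolution). -/
noncomputable def convList (L : List (G → ℝ)) : G → ℝ := L.foldr convol (delta 1)

/-- `μ` is a probability mass function on the finite group `G`. -/
def IsPMF (μ : G → ℝ) : Prop := (∀ g, 0 ≤ μ g) ∧ ∑ g, μ g = 1

namespace AuxShuffle

abbrev G4 := Equiv.Perm (Fin 4)

noncomputable def sgn (g : G4) : ℝ := ((Equiv.Perm.sign g : ℤ) : ℝ)

lemma sgn_mul (a b : G4) : sgn (a * b) = sgn a * sgn b := by
  simp [sgn]

lemma sgn_one : sgn (1 : G4) = 1 := by simp [sgn]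

noncomputable def Phi (μ : G4 → ℝ) : ℝ := ∑ g : G4, μ g * sgn g

lemma Phi_convol (μ ν : G4 → ℝ) : Phi (convol μ ν) = Phi μ * Phi ν := by
  unfold Phi convol
  simp only [Finset.sum_mul]
  rw [Finset.sum_comm]
  have key : ∀ h : G4, ∑ g : G4, μ h * ν (h⁻¹ * g) * sgn g
      = ∑ k : G4, μ h * ν k * sgn (h * k) := by
    intro h
    exact (Fintype.sum_equiv (Equiv.mulLeft h)
      (fun k => μ h * ν k * sgn (h * k))
      (fun g => μ h * ν (h⁻¹ * g) * sgn g)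
      (fun k => by simp)).symm
  simp only [key, sgn_mul]
  refine Finset.sum_congr rfl fun h _ => ?_
  rw [Finset.mul_sum]
  refine Finset.sum_congr rfl fun k _ => ?_
  ring

lemma Phi_delta_one : Phi (delta (1 : G4)) = 1 := by
  unfold Phi delta
  simp [Finset.sum_ite_eq', sgn]

lemma Phi_convList (L : List (G4 → ℝ)) : Phi (convList L) = (L.map Phi).prod := by
  induction L with
  | nil => simpa [convList] using Phi_delta_one
  | cons a l ih =>
    simp only [convList, List.foldr_cons, List.map_cons, List.prod_cons]
    rw [show (List.foldr convol (delta 1) l) = convList l from rfl, Phi_convol, ih]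

lemma Phi_unif (S : Finset G4) : Phi (unif S) = (S.card : ℝ)⁻¹ * ∑ g ∈ S, sgn g := by
  unfold Phi unif
  simp only [ite_mul, zero_mul]
  rw [Finset.sum_ite_mem, Finset.univ_inter, Finset.mul_sum]

/-- triadic rationals -/
def T (x : ℝ) : Prop := ∃ (k : ℤ) (b : ℕ), x * 3 ^ b = (k : ℝ)

lemma T_zero : T 0 := ⟨0, 0, by simp⟩
lemma T_one : T 1 := ⟨1, 0, by simp⟩
lemma T_third : T ((3 : ℝ)⁻¹) := ⟨1, 1, by norm_num⟩

lemma T_add {x y : ℝ} (hx : T x) (hy : T y) : T (x + y) := by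
  obtain ⟨k, a, hk⟩ := hx
  obtain ⟨l, b, hl⟩ := hy
  refine ⟨k * 3 ^ b + l * 3 ^ a, a + b, ?_⟩
  push_cast
  rw [pow_add]
  linear_combination (3:ℝ) ^ b * hk + (3:ℝ) ^ a * hl

lemma T_mul {x y : ℝ} (hx : T x) (hy : T y) : T (x * y) := by
  obtain ⟨k, a, hk⟩ := hx
  obtain ⟨l, b, hl⟩ := hy
  refine ⟨k * l, a + b, ?_⟩
  push_cast
  rw [pow_add]
  linear_combination (y * 3 ^ b) * hk + (k : ℝ) * hl

lemma T_sum {α : Type*} (s : Finset α) (f : α → ℝ) (h : ∀ i ∈ s, T (f i)) :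
    T (∑ i ∈ s, f i) := by
  classical
  induction s using Finset.induction_on with
  | empty => simpa using T_zero
  | insert _ _ hni ih =>
    rw [Finset.sum_insert hni]
    exact T_add (h _ (Finset.mem_insert_self _ _))
      (ih fun i hi => h i (Finset.mem_insert_of_mem hi))

lemma T_convol {μ ν : G4 → ℝ} (hμ : ∀ g, T (μ g)) (hν : ∀ g, T (ν g)) :
    ∀ g, T (convol μ ν g) := fun g =>
  T_sum _ _ fun h _ => T_mul (hμ h) (hν _)

lemma T_delta (π : G4) : ∀ g, T (delta π g) := by
  intro g
  unfold delta
  split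
  · exact T_one
  · exact T_zero

lemma T_convList (L : List (G4 → ℝ)) (h : ∀ μ ∈ L, ∀ g, T (μ g)) :
    ∀ g, T (convList L g) := by
  induction L with
  | nil => exact T_delta 1
  | cons a l ih =>
    exact T_convol (h a (List.mem_cons_self))
      (ih fun μ hμ => h μ (List.mem_cons_of_mem a hμ))

end AuxShuffle

/-- The shuffle `{id, (1 2)(3 4)}` cannot be realized by any finite nonempty
sequence of deterministic permutations and 2-, 3-, or 4-card random cuts
on `S₄`. -/
theorem stmt1 :
    ¬ ∃ L : List (Equiv.Perm (Fin 4) → ℝ), L ≠ [] ∧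
      (∀ μ ∈ L,
        (∃ π : Equiv.Perm (Fin 4), μ = delta π) ∨
        (∃ τ : Equiv.Perm (Fin 4), τ.IsSwap ∧ μ = unif {1, τ}) ∨
        (∃ c : Equiv.Perm (Fin 4), c.IsThreeCycle ∧ μ = unif {1, c, c ^ 2}) ∨
        (∃ σ : Equiv.Perm (Fin 4), σ.IsCycle ∧ σ.support.card = 4 ∧
          μ = unif {1, σ, σ ^ 2, σ ^ 3})) ∧
      convList L = unif {1, Equiv.swap (0 : Fin 4) 1 * Equiv.swap (2 : Fin 4) 3} := by
  rintro ⟨L, -, hmem, heq⟩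
  open AuxShuffle in
  set g0 : Equiv.Perm (Fin 4) := Equiv.swap 0 1 * Equiv.swap 2 3 with hg0
  have hg0ne : (1 : Equiv.Perm (Fin 4)) ≠ g0 := by decide
  have hsgn_g0 : AuxShuffle.sgn g0 = 1 := by
    unfold AuxShuffle.sgn
    rw [hg0, map_mul, Equiv.Perm.sign_swap (by decide), Equiv.Perm.sign_swap (by decide)]
    norm_num
  have hcard2 : ({1, g0} : Finset (Equiv.Perm (Fin 4))).card = 2 := by
    rw [Finset.card_insert_of_notMem (by simpa using hg0ne), Finset.card_singleton]
  have hPhiT : AuxShuffle.Phi (unif {1, g0}) = 1 := by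
    rw [AuxShuffle.Phi_unif, Finset.sum_insert (by simpa using hg0ne),
      Finset.sum_singleton, AuxShuffle.sgn_one, hsgn_g0, hcard2]
    norm_num
  have hprod : (L.map AuxShuffle.Phi).prod = 1 := by
    rw [← AuxShuffle.Phi_convList, heq, hPhiT]
  have hne0 : ∀ μ ∈ L, AuxShuffle.Phi μ ≠ 0 := by
    intro μ hμ h0
    have h0m : (0 : ℝ) ∈ L.map AuxShuffle.Phi := h0 ▸ List.mem_map_of_mem (f := AuxShuffle.Phi) hμ
    have := List.prod_eq_zero h0m
    rw [hprod] at this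
    norm_num at this
  have hT : ∀ μ ∈ L, ∀ g, AuxShuffle.T (μ g) := by
    intro μ hμ
    rcases hmem μ hμ with ⟨π, rfl⟩ | ⟨τ, hτ, rfl⟩ | ⟨c, hc, rfl⟩ | ⟨σ, hσc, hσ4, rfl⟩
    · exact AuxShuffle.T_delta π
    · exfalso
      apply hne0 _ hμ
      have hsτ : AuxShuffle.sgn τ = -1 := by
        obtain ⟨a, b, hab, rfl⟩ := hτ
        unfold AuxShuffle.sgn
        rw [Equiv.Perm.sign_swap hab]
        norm_num
      have hτ1 : (1 : Equiv.Perm (Fin 4)) ≠ τ := by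
        intro h
        rw [← h, AuxShuffle.sgn_one] at hsτ
        norm_num at hsτ
      rw [AuxShuffle.Phi_unif, Finset.sum_insert (by simpa using hτ1),
        Finset.sum_singleton, AuxShuffle.sgn_one, hsτ]
      ring
    · -- three-cycle: values are 0 or 1/3
      have ho : orderOf c = 3 := hc.orderOf
      have h1 : c ≠ 1 := by
        intro h
        rw [h, orderOf_one] at ho
        norm_num at ho
      have h2 : c ^ 2 ≠ 1 := by
        intro h
        have := orderOf_dvd_of_pow_eq_one h
        rw [ho] at this
        norm_num at this
      have h12 : c ≠ c ^ 2 := by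
        intro h
        apply h1
        have h' : c * c = c * 1 := by
          rw [mul_one, ← sq]
          exact h.symm
        exact mul_left_cancel h'
      have hcard : ({1, c, c ^ 2} : Finset (Equiv.Perm (Fin 4))).card = 3 := by
        rw [Finset.card_insert_of_notMem (by simp [Ne.symm h1, Ne.symm h2]),
          Finset.card_insert_of_notMem (by simp [h12]), Finset.card_singleton]
      intro g
      unfold unif
      split
      · rw [hcard]
        have : (((3 : ℕ) : ℝ))⁻¹ = (3 : ℝ)⁻¹ := by norm_num
        rw [this]
        exact AuxShuffle.T_third
      · exact AuxShuffle.T_zero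
    · exfalso
      apply hne0 _ hμ
      have ho : orderOf σ = 4 := by rw [hσc.orderOf, hσ4]
      have key : ∀ i j : ℕ, i < 4 → j < 4 → i ≠ j → σ ^ i ≠ σ ^ j := by
        intro i j hi hj hij h
        exact hij (pow_injOn_Iio_orderOf (by simpa [ho] using hi)
          (by simpa [ho] using hj) h)
      have d01 : (1 : Equiv.Perm (Fin 4)) ≠ σ := by
        simpa using key 0 1 (by norm_num) (by norm_num) (by norm_num)
      have d02 : (1 : Equiv.Perm (Fin 4)) ≠ σ ^ 2 := by
        simpa using key 0 2 (by norm_num) (by norm_num) (by norm_num)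
      have d03 : (1 : Equiv.Perm (Fin 4)) ≠ σ ^ 3 := by
        simpa using key 0 3 (by norm_num) (by norm_num) (by norm_num)
      have d12 : σ ≠ σ ^ 2 := by
        simpa using key 1 2 (by norm_num) (by norm_num) (by norm_num)
      have d13 : σ ≠ σ ^ 3 := by
        simpa using key 1 3 (by norm_num) (by norm_num) (by norm_num)
      have d23 : σ ^ 2 ≠ σ ^ 3 := by
        simpa using key 2 3 (by norm_num) (by norm_num) (by norm_num)
      have hs1 : AuxShuffle.sgn σ = -1 := by
        unfold AuxShuffle.sgn
        rw [hσc.sign, hσ4]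
        norm_num
      have hs2 : AuxShuffle.sgn (σ ^ 2) = 1 := by
        rw [sq, AuxShuffle.sgn_mul, hs1]
        norm_num
      have hs3 : AuxShuffle.sgn (σ ^ 3) = -1 := by
        rw [pow_succ, AuxShuffle.sgn_mul, hs2, hs1]
        norm_num
      rw [AuxShuffle.Phi_unif,
        Finset.sum_insert (by simp [d01, d02, d03]),
        Finset.sum_insert (by simp [d12, d13]),
        Finset.sum_insert (by simp [d23]),
        Finset.sum_singleton, AuxShuffle.sgn_one, hs1, hs2, hs3]
      ring
  have hThalf : AuxShuffle.T ((2 : ℝ)⁻¹) := by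
    have h := AuxShuffle.T_convList L hT 1
    rw [heq] at h
    have hv : unif ({1, g0} : Finset (Equiv.Perm (Fin 4))) 1 = (2 : ℝ)⁻¹ := by
      unfold unif
      rw [if_pos (Finset.mem_insert_self _ _), hcard2]
      norm_num
    rwa [hv] at h
  obtain ⟨k, b, hk⟩ := hThalf
  have hr : ((3 : ℤ) ^ b : ℝ) = ((2 * k : ℤ) : ℝ) := by
    push_cast
    linear_combination 2 * hk
  have hz : (3 : ℤ) ^ b = 2 * k := by exact_mod_cast hr
  have hodd : Odd ((3 : ℤ) ^ b) := Odd.pow ⟨1, by norm_num⟩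
  have heven : Even ((3 : ℤ) ^ b) := ⟨k, by omega⟩
  exact ((Int.not_odd_iff_even.mpr heven)) hodd
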